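/- arXiv:1201.0814 — 9 statements merged into one kernel-verified Lean document; each statement's English description precedes it below -/
import Mathlib

section
/- If D₁ is a subspace of K with J(D₁) = D₁ and D₂ is the orthogonal complement of D₁ inside K, then: φ(D₁) = D₁; ωX = 0 for every X ∈ D₁; φ(D₂) ⊆ D₂; and B(Kᗮ) ⊆ D₂. -/
open scoped RealInnerProductSpace

lemma j_inner {V : Type*} [NormedAddCommGroup V] [InnerProductSpace ℝ V]
    (J : V →ₗ[ℝ] V) (hJiso : ∀ v : V, ‖J v‖ = ‖v‖) (x y : V) :
    ⟪J x, J y⟫ = ⟪x, y⟫ := by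
  have hx := norm_add_sq_real (J x) (J y)
  rw [← map_add, hJiso, hJiso, hJiso] at hx
  have hy := norm_add_sq_real x y
  linarith

lemma j_skew {V : Type*} [NormedAddCommGroup V] [InnerProductSpace ℝ V]
    (J : V →ₗ[ℝ] V) (hJiso : ∀ v : V, ‖J v‖ = ‖v‖) (hJ2 : ∀ v : V, J (J v) = -v)
    (x y : V) : ⟪J x, y⟫ = -⟪x, J y⟫ := by
  have := j_inner J hJiso x (J y)
  rw [hJ2] at this
  rw [← this, inner_neg_right, neg_neg]

/-- If `D₁ ⊆ K` with `J(D₁) = D₁` and `D₂` is the orthogonal complement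
of `D₁` inside `K`, then `φ(D₁) = D₁`, `ω = 0` on `D₁`, `φ(D₂) ⊆ D₂` and `B(Kᗮ) ⊆ D₂`. -/
theorem stmt_2 {V : Type*} [NormedAddCommGroup V] [InnerProductSpace ℝ V]
    [FiniteDimensional ℝ V]
    (J : V →ₗ[ℝ] V) (hJiso : ∀ v : V, ‖J v‖ = ‖v‖) (hJ2 : ∀ v : V, J (J v) = -v)
    (K : Submodule ℝ V)
    (φ : K → K) (ω : K → Kᗮ) (B : Kᗮ → K)
    (hφ : ∀ X : K, φ X = K.orthogonalProjectionOnto (J (X : V)))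
    (hω : ∀ X : K, ω X = Kᗮ.orthogonalProjectionOnto (J (X : V)))
    (hB : ∀ Z : Kᗮ, B Z = K.orthogonalProjectionOnto (J (Z : V)))
    (D₁ D₂ : Submodule ℝ V) (hD₁K : D₁ ≤ K) (hJD₁ : D₁.map J = D₁)
    (hD₂ : D₂ = D₁ᗮ ⊓ K) :
    (∀ X : K, (X : V) ∈ D₁ → (φ X : V) ∈ D₁) ∧
    (∀ Y : K, (Y : V) ∈ D₁ → ∃ X : K, (X : V) ∈ D₁ ∧ φ X = Y) ∧
    (∀ X : K, (X : V) ∈ D₁ → ω X = 0) ∧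
    (∀ X : K, (X : V) ∈ D₂ → (φ X : V) ∈ D₂) ∧
    (∀ Z : Kᗮ, (B Z : V) ∈ D₂) := by
  have hJmem : ∀ x : V, x ∈ D₁ → J x ∈ D₁ := fun x hx => by
    rw [← hJD₁]; exact Submodule.mem_map_of_mem hx
  -- projection of element of K
  have hprojK : ∀ v : V, v ∈ K → (K.orthogonalProjectionOnto v : V) = v := fun v hv => by
    exact (Submodule.starProjection_eq_self_iff (K := K)).2 hv
  have hφJ : ∀ X : K, (X : V) ∈ D₁ → (φ X : V) = J (X : V) := fun X hX => by
    rw [hφ, hprojK _ (hD₁K (hJmem _ hX))]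
  refine ⟨fun X hX => ?_, fun Y hY => ?_, fun X hX => ?_, fun X hX => ?_, fun Z => ?_⟩
  · rw [hφJ X hX]; exact hJmem _ hX
  · have hY' : (Y : V) ∈ D₁.map J := by rw [hJD₁]; exact hY
    obtain ⟨x, hx, hxY⟩ := hY'
    refine ⟨⟨x, hD₁K hx⟩, hx, ?_⟩
    apply Subtype.ext
    rw [hφJ ⟨x, hD₁K hx⟩ hx]; exact hxY
  · apply Subtype.ext
    rw [hω]
    have : J (X : V) ∈ Kᗮᗮ := by
      rw [Submodule.orthogonal_orthogonal]; exact hD₁K (hJmem _ hX)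
    rw [Submodule.orthogonalProjectionOnto_apply_of_mem_orthogonal this]
  · rw [hD₂] at hX ⊢
    obtain ⟨hX1, hX2⟩ := Submodule.mem_inf.1 hX
    refine Submodule.mem_inf.2 ⟨?_, (φ X).2⟩
    rw [Submodule.mem_orthogonal]
    intro u hu
    rw [hφ]
    have h1 : ⟪u, (J (X : V)) - (K.orthogonalProjectionOnto (J (X : V)) : V)⟫ = 0 := by
      rw [real_inner_comm]
      exact Submodule.starProjection_inner_eq_zero (K := K) _ u (hD₁K hu)
    have h2 : ⟪u, J (X : V)⟫ = 0 := by
      rw [real_inner_comm, j_skew J hJiso hJ2, real_inner_comm]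
      rw [Submodule.mem_orthogonal] at hX1
      simp [hX1 _ (hJmem _ hu)]
    rw [inner_sub_right, h2] at h1
    linarith
  · rw [hD₂]
    refine Submodule.mem_inf.2 ⟨?_, (B Z).2⟩
    rw [Submodule.mem_orthogonal]
    intro u hu
    rw [hB]
    have h1 : ⟪u, (J (Z : V)) - (K.orthogonalProjectionOnto (J (Z : V)) : V)⟫ = 0 := by
      rw [real_inner_comm]
      exact Submodule.starProjection_inner_eq_zero (K := K) _ u (hD₁K hu)
    have h2 : ⟪u, J (Z : V)⟫ = 0 := by
      rw [real_inner_comm, j_skew J hJiso hJ2]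
      have hZ := Z.2
      rw [Submodule.mem_orthogonal] at hZ
      rw [real_inner_comm]
      simp [hZ _ (hD₁K (hJmem _ hu))]
    rw [inner_sub_right, h2] at h1
    linarith
end

section
/- Suppose the configuration (J, K, D₁, D₂) is semi-slant with angle θ, i.e. for every nonzero X ∈ D₂ the angle between JX and its orthogonal projection onto D₂ equals θ. Then φ(φX) = −(cos θ)² · X for every X ∈ D₂. -/
open InnerProductSpace

section aux

variable {V : Type*} [NormedAddCommGroup V] [InnerProductSpace ℝ V]

/-- A norm-preserving linear map preserves the real inner product. -/
lemma stmt3_J_inner (J : V →ₗ[ℝ] V) (hJiso : ∀ v : V, ‖J v‖ = ‖v‖) (x y : V) :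
    ⟪J x, J y⟫_ℝ = ⟪x, y⟫_ℝ := by
  rw [real_inner_eq_norm_add_mul_self_sub_norm_mul_self_sub_norm_mul_self_div_two,
    real_inner_eq_norm_add_mul_self_sub_norm_mul_self_sub_norm_mul_self_div_two x y,
    ← map_add, hJiso, hJiso, hJiso]

/-- A compatible almost complex structure is skew-adjoint. -/
lemma stmt3_J_skew (J : V →ₗ[ℝ] V) (hJiso : ∀ v : V, ‖J v‖ = ‖v‖)
    (hJ2 : ∀ v : V, J (J v) = -v) (x y : V) :
    ⟪J x, y⟫_ℝ = -⟪x, J y⟫_ℝ := by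
  have h := stmt3_J_inner J hJiso x (J y)
  rw [hJ2, inner_neg_right] at h
  linarith

end aux

/-- If the configuration `(J, K, D₁, D₂)` is semi-slant with angle `θ`
(for every nonzero `X ∈ D₂` the angle between `JX` and its orthogonal projection onto
`D₂` equals `θ`), then `φ(φX) = -(cos θ)² • X` for every `X ∈ D₂`. -/
theorem stmt_3 {V : Type*} [NormedAddCommGroup V] [InnerProductSpace ℝ V]
    [FiniteDimensional ℝ V]
    (J : V →ₗ[ℝ] V) (hJiso : ∀ v : V, ‖J v‖ = ‖v‖) (hJ2 : ∀ v : V, J (J v) = -v)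
    (K : Submodule ℝ V)
    (φ : K → K) (ω : K → Kᗮ)
    (hφ : ∀ X : K, φ X = Submodule.orthogonalProjectionOnto K (J (X : V)))
    (hω : ∀ X : K, ω X = Submodule.orthogonalProjectionOnto Kᗮ (J (X : V)))
    (D₁ D₂ : Submodule ℝ V) (hD₁K : D₁ ≤ K) (hJD₁ : D₁.map J = D₁)
    (hD₂ : D₂ = D₁ᗮ ⊓ K)
    (θ : ℝ)
    (hslant : ∀ X : V, X ∈ D₂ → X ≠ 0 →
      InnerProductGeometry.angle (J X) (Submodule.orthogonalProjectionOnto D₂ (J X) : V) = θ) :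
    ∀ X : K, (X : V) ∈ D₂ → φ (φ X) = (-(Real.cos θ ^ 2)) • X := by
  set c : ℝ := Real.cos θ with hc
  -- inner product of φ Z with anything in K equals that of J Z
  have hKinner : ∀ (Z : K) (y : V), y ∈ K → ⟪(φ Z : V), y⟫_ℝ = ⟪J (Z : V), y⟫_ℝ := by
    intro Z y hy
    have h0 : ⟪J (Z : V) - (K.orthogonalProjectionOnto (J (Z : V)) : V), y⟫_ℝ = 0 :=
      K.starProjection_inner_eq_zero (J (Z : V)) y hy
    rw [inner_sub_left] at h0
    rw [hφ]
    linarith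
  -- D₂ ≤ K
  have hD₂K : D₂ ≤ K := by rw [hD₂]; exact inf_le_right
  -- φ maps D₂ into D₂
  have hmem : ∀ X : K, (X : V) ∈ D₂ → (φ X : V) ∈ D₂ := by
    intro X hX
    rw [hD₂] at hX ⊢
    obtain ⟨hX1, _⟩ := hX
    refine ⟨?_, (φ X).2⟩
    intro z hz
    have hJz : J z ∈ D₁ := by
      rw [← hJD₁]; exact Submodule.mem_map_of_mem hz
    have h1 : ⟪(φ X : V), z⟫_ℝ = ⟪J (X : V), z⟫_ℝ := hKinner X z (hD₁K hz)
    have h2 : ⟪J (X : V), z⟫_ℝ = -⟪(X : V), J z⟫_ℝ := stmt3_J_skew J hJiso hJ2 _ z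
    have h3 : ⟪(X : V), J z⟫_ℝ = 0 := by
      rw [real_inner_comm]; exact hX1 (J z) hJz
    rw [real_inner_comm, h1, h2, h3, neg_zero]
  -- the projection onto D₂ of J X is φ X, for X ∈ D₂
  have hprojD₂ : ∀ X : K, (X : V) ∈ D₂ →
      (Submodule.orthogonalProjectionOnto D₂ (J (X : V)) : V) = (φ X : V) := by
    intro X hX
    refine D₂.eq_starProjection_of_mem_orthogonal (hmem X hX) ?_
    have h1 : J (X : V) - (φ X : V) ∈ Kᗮ := by
      rw [hφ]; exact K.sub_starProjection_mem_orthogonal _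
    exact (Submodule.orthogonal_le hD₂K) h1
  -- norm scaling: ‖φ X‖ = cos θ * ‖X‖ for X ∈ D₂
  have hnorm : ∀ X : K, (X : V) ∈ D₂ → ‖(φ X : V)‖ = c * ‖(X : V)‖ := by
    intro X hX
    by_cases hX0 : (X : V) = 0
    · have : X = 0 := Subtype.ext hX0
      rw [this, hX0] at *
      have : φ (0 : K) = 0 := by
        rw [hφ]; simp
      rw [this]; simp
    · have hang := hslant (X : V) hX hX0
      rw [hprojD₂ X hX] at hang
      by_cases hφ0 : (φ X : V) = 0
      · rw [hφ0] at hang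
        rw [InnerProductGeometry.angle_zero_right] at hang
        rw [hφ0, hc, ← hang, Real.cos_pi_div_two, zero_mul, norm_zero]
      · have hinn : ⟪J (X : V), (φ X : V)⟫_ℝ = ‖(φ X : V)‖ * ‖(φ X : V)‖ := by
          rw [← hKinner X (φ X : V) (φ X).2]
          exact real_inner_self_eq_norm_mul_norm _
        have hcos := InnerProductGeometry.cos_angle (J (X : V)) (φ X : V)
        rw [hang, hinn, hJiso] at hcos
        have hXn : ‖(X : V)‖ ≠ 0 := norm_ne_zero_iff.mpr hX0
        have hφn : ‖(φ X : V)‖ ≠ 0 := norm_ne_zero_iff.mpr hφ0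
        field_simp at hcos
        rw [hc]
        have h := mul_right_cancel₀ hφn
          (show Real.cos θ * ‖(X : V)‖ * ‖(φ X : V)‖ = ‖(φ X : V)‖ * ‖(φ X : V)‖ by
            rw [hcos])
        linarith
  -- φ is additive
  have hadd : ∀ X Y : K, (φ (X + Y) : V) = (φ X : V) + (φ Y : V) := by
    intro X Y
    rw [hφ, hφ, hφ]
    push_cast
    rw [map_add, map_add]
    push_cast
    ring
  -- inner product scaling on D₂
  have hinner : ∀ X Y : K, (X : V) ∈ D₂ → (Y : V) ∈ D₂ →
      ⟪(φ X : V), (φ Y : V)⟫_ℝ = c ^ 2 * ⟪(X : V), (Y : V)⟫_ℝ := by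
    intro X Y hX hY
    have hXY : ((X + Y : K) : V) ∈ D₂ := by
      push_cast; exact D₂.add_mem hX hY
    have h1 := hnorm X hX
    have h2 := hnorm Y hY
    have h3 := hnorm (X + Y) hXY
    rw [hadd] at h3
    have hcoe : ((X + Y : K) : V) = (X : V) + (Y : V) := rfl
    rw [hcoe] at h3
    rw [real_inner_eq_norm_add_mul_self_sub_norm_mul_self_sub_norm_mul_self_div_two,
      real_inner_eq_norm_add_mul_self_sub_norm_mul_self_sub_norm_mul_self_div_two
        (X : V) (Y : V), h1, h2, h3]
    ring
  -- key: for y ∈ D₂, ⟪φ (φ X), y⟫ = -c² ⟪X, y⟫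
  have hkey : ∀ X : K, (X : V) ∈ D₂ → ∀ y : V, y ∈ D₂ →
      ⟪(φ (φ X) : V), y⟫_ℝ = -(c ^ 2) * ⟪(X : V), y⟫_ℝ := by
    intro X hX y hy
    set Y : K := ⟨y, hD₂K hy⟩ with hY
    have hYD₂ : (Y : V) ∈ D₂ := hy
    have h1 : ⟪(φ (φ X) : V), y⟫_ℝ = ⟪J (φ X : V), y⟫_ℝ := hKinner (φ X) y (hD₂K hy)
    have h2 : ⟪J (φ X : V), y⟫_ℝ = -⟪(φ X : V), J y⟫_ℝ := stmt3_J_skew J hJiso hJ2 _ _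
    have h3 : ⟪(φ X : V), J y⟫_ℝ = ⟪(φ X : V), (φ Y : V)⟫_ℝ := by
      have := hKinner Y (φ X : V) (φ X).2
      rw [real_inner_comm (J y) ((φ X : V)), real_inner_comm ((φ Y : V)) ((φ X : V))]
      exact this.symm
    rw [h1, h2, h3, hinner X Y hX hYD₂]
    ring
  -- conclude
  intro X hX
  have hφX : (φ X : V) ∈ D₂ := hmem X hX
  have hφφX : (φ (φ X) : V) ∈ D₂ := hmem (φ X) hφX
  set w : V := (φ (φ X) : V) + c ^ 2 • (X : V) with hw
  have hwD₂ : w ∈ D₂ := D₂.add_mem hφφX (D₂.smul_mem _ hX)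
  have hww : ⟪w, w⟫_ℝ = 0 := by
    rw [hw, inner_add_left, real_inner_smul_left, hkey X hX w hwD₂]
    ring
  have hw0 : w = 0 := by
    rwa [inner_self_eq_zero] at hww
  apply Subtype.ext
  have : (φ (φ X) : V) = -(c ^ 2 • (X : V)) := by
    rw [← add_eq_zero_iff_eq_neg, ← hw, hw0]
  rw [this]
  push_cast
  rw [← neg_smul]
end

section
/- Suppose θ ∈ [0, π/2] and φ(φX) = −(cos θ)² · X for every X ∈ D₂. Then for every nonzero X ∈ D₂ the angle between JX and its orthogonal projection onto D₂ equals θ; that is, the configuration (J, K, D₁, D₂) is semi-slant with angle θ. -/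
open RealInnerProductSpace

set_option maxHeartbeats 1000000 in
/-- Converse of Proposition 2.8. If `θ ∈ [0, π/2]` and
`φ(φX) = -(cos θ)² • X` for every `X ∈ D₂`, then for every nonzero `X ∈ D₂` the angle
between `JX` and its orthogonal projection onto `D₂` equals `θ`. -/
theorem stmt_4 {V : Type*} [NormedAddCommGroup V] [InnerProductSpace ℝ V]
    [FiniteDimensional ℝ V]
    (J : V →ₗ[ℝ] V) (hJiso : ∀ v : V, ‖J v‖ = ‖v‖) (hJ2 : ∀ v : V, J (J v) = -v)
    (K : Submodule ℝ V)
    (φ : K → K)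
    (hφ : ∀ X : K, φ X = Submodule.orthogonalProjectionOnto K (J (X : V)))
    (D₁ D₂ : Submodule ℝ V) (hD₁K : D₁ ≤ K) (hJD₁ : D₁.map J = D₁)
    (hD₂ : D₂ = D₁ᗮ ⊓ K)
    (θ : ℝ) (hθ : θ ∈ Set.Icc 0 (Real.pi / 2))
    (hφ2 : ∀ X : K, (X : V) ∈ D₂ → φ (φ X) = (-(Real.cos θ ^ 2)) • X) :
    ∀ X : V, X ∈ D₂ → X ≠ 0 →
      InnerProductGeometry.angle (J X) (Submodule.orthogonalProjectionOnto D₂ (J X) : V) = θ := by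
  intro X hX hX0
  obtain ⟨hθ0, hθπ⟩ := hθ
  have hc0 : (0:ℝ) ≤ Real.cos θ := Real.cos_nonneg_of_mem_Icc ⟨by linarith [Real.pi_pos], hθπ⟩
  set c := Real.cos θ with hc
  -- J preserves the inner product
  have hinner : ∀ x y : V, ⟪J x, J y⟫ = ⟪x, y⟫ := fun x y =>
    (LinearIsometry.mk J hJiso).inner_map_map x y
  have hskew : ∀ x y : V, ⟪J x, y⟫ = -⟪x, J y⟫ := by
    intro x y
    have h := hinner x (J y)
    rw [hJ2, inner_neg_right] at h
    linarith
  have hXD₁ : X ∈ D₁ᗮ := (hD₂ ▸ hX).1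
  have hXK : X ∈ K := (hD₂ ▸ hX).2
  have hD₂K : D₂ ≤ K := by rw [hD₂]; exact inf_le_right
  set XK : K := ⟨X, hXK⟩ with hXKdef
  set Y : V := (φ XK : V) with hY
  have hYval : Y = (Submodule.orthogonalProjectionOnto K (J X) : V) := by
    rw [hY, hφ XK]
  have hYK : Y ∈ K := (φ XK).2
  -- Y ∈ D₂
  have hYD₂ : Y ∈ D₂ := by
    rw [hD₂]
    refine ⟨?_, hYK⟩
    intro Z hZ
    have hZK : Z ∈ K := hD₁K hZ
    have h1 : ⟪J X - Y, Z⟫ = 0 := by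
      rw [hYval]; exact Submodule.starProjection_inner_eq_zero (J X) Z hZK
    have hJZ : J Z ∈ D₁ := by
      rw [← hJD₁]; exact Submodule.mem_map_of_mem hZ
    have h2 : ⟪J X, Z⟫ = 0 := by
      rw [hskew, real_inner_comm, hXD₁ (J Z) hJZ, neg_zero]
    have : ⟪Y, Z⟫ = 0 := by
      have := inner_sub_left (𝕜 := ℝ) (J X) Y Z
      rw [h1, h2] at this
      linarith
    rw [real_inner_comm] at this
    exact this
  -- projection of J X onto D₂ is Y
  have hproj : (Submodule.orthogonalProjectionOnto D₂ (J X) : V) = Y := by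
    rw [← Submodule.starProjection_apply]
    apply Submodule.eq_starProjection_of_mem_of_inner_eq_zero hYD₂
    intro w hw
    rw [hYval]
    exact Submodule.starProjection_inner_eq_zero (J X) w (hD₂K hw)
  -- ⟪J X, Y⟫ = ‖Y‖²
  have hJXY : ⟪J X, Y⟫ = ‖Y‖ ^ 2 := by
    have h1 : ⟪J X - Y, Y⟫ = 0 := by
      have h0 : ⟪J X - (Submodule.orthogonalProjectionOnto K (J X) : V), Y⟫ = 0 := Submodule.starProjection_inner_eq_zero (J X) Y hYK
      rwa [← hYval] at h0
    have h2 := inner_sub_left (𝕜 := ℝ) (J X) Y Y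
    rw [h1] at h2
    rw [← real_inner_self_eq_norm_sq]
    linarith
  -- ‖Y‖² = c² ‖X‖²
  have hYXmem : (XK : V) ∈ D₂ := hX
  have hkey : ‖Y‖ ^ 2 = c ^ 2 * ‖X‖ ^ 2 := by
    have h := hφ2 XK hYXmem
    have h' : ⟪(φ (φ XK) : V), X⟫ = -(c ^ 2) * ⟪X, X⟫ := by
      rw [h]
      push_cast
      rw [inner_smul_left]
      norm_num
      exact Or.inl (real_inner_self_eq_norm_sq X)
    have hφφ : (φ (φ XK) : V) = (Submodule.orthogonalProjectionOnto K (J Y) : V) := by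
      rw [hφ (φ XK)]
    have h3 : ⟪(φ (φ XK) : V) - J Y, X⟫ = 0 := by
      have this : ⟪J Y - (Submodule.orthogonalProjectionOnto K (J Y) : V), X⟫ = 0 := Submodule.starProjection_inner_eq_zero (J Y) X hXK
      rw [hφφ]
      have heq : (Submodule.orthogonalProjectionOnto K (J Y) : V) - J Y = -(J Y - (Submodule.orthogonalProjectionOnto K (J Y) : V)) := by abel
      rw [heq, inner_neg_left, this, neg_zero]
    have h4 : ⟪J Y, X⟫ = -‖Y‖ ^ 2 := by
      rw [hskew]
      rw [real_inner_comm] at hJXY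
      rw [hJXY]
    have h5 := inner_sub_left (𝕜 := ℝ) (φ (φ XK) : V) (J Y) X
    rw [h3, h4] at h5
    have h6 : ⟪X, X⟫ = ‖X‖ ^ 2 := real_inner_self_eq_norm_sq X
    nlinarith [h', h5]
  have hXnorm : ‖X‖ ≠ 0 := norm_ne_zero_iff.mpr hX0
  have hXpos : 0 < ‖X‖ := norm_pos_iff.mpr hX0
  have hYnorm : ‖Y‖ = c * ‖X‖ := by
    have : ‖Y‖ ^ 2 = (c * ‖X‖) ^ 2 := by rw [hkey]; ring
    have h1 : 0 ≤ ‖Y‖ := norm_nonneg _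
    have h2 : 0 ≤ c * ‖X‖ := mul_nonneg hc0 (norm_nonneg _)
    nlinarith
  rw [hproj]
  rw [InnerProductGeometry.angle, hJXY, hJiso, hYnorm]
  rcases eq_or_lt_of_le hc0 with hc00 | hcpos
  · -- c = 0, θ = π/2
    have hcθ : θ = Real.pi / 2 := by
      have hpi := Real.pi_pos
      have hcospi2 : Real.cos (Real.pi / 2) = 0 := Real.cos_pi_div_two
      exact Real.injOn_cos ⟨hθ0, by linarith⟩ ⟨by linarith, by linarith⟩
        (by rw [← hc, ← hc00, hcospi2])
    rw [← hc00]
    simp [hcθ, Real.arccos_zero]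
  · have : ((c * ‖X‖) ^ 2) / (‖X‖ * (c * ‖X‖)) = c := by
      field_simp
    rw [this]
    exact Real.arccos_cos hθ0 (by linarith [Real.pi_pos])
end

section
/- Suppose the configuration (J, K, D₁, D₂) is semi-slant with angle θ and θ ∈ [0, π/2). Define Ĵ : K → K by ĴX = J(PX) + (1/cos θ) · φ(QX), where P and Q are the orthogonal projections of K onto D₁ and D₂. Then Ĵ(ĴX) = −X for every X ∈ K, i.e. Ĵ is a complex structure on K. -/
open RealInnerProductSpace

lemma orthogonalProjection_inner_eq_zero {V : Type*} [NormedAddCommGroup V]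
    [InnerProductSpace ℝ V] {K : Submodule ℝ V} [K.HasOrthogonalProjection] (v w : V)
    (hw : w ∈ K) : ⟪v - (K.orthogonalProjectionOnto v : V), w⟫ = 0 :=
  Submodule.starProjection_inner_eq_zero v w hw

lemma sub_orthogonalProjection_mem_orthogonal {V : Type*} [NormedAddCommGroup V]
    [InnerProductSpace ℝ V] {K : Submodule ℝ V} [K.HasOrthogonalProjection] (v : V) :
    v - (K.orthogonalProjectionOnto v : V) ∈ Kᗮ :=
  Submodule.sub_starProjection_mem_orthogonal v

lemma eq_orthogonalProjection_of_mem_of_inner_eq_zero {V : Type*} [NormedAddCommGroup V]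
    [InnerProductSpace ℝ V] {K : Submodule ℝ V} [K.HasOrthogonalProjection] {u v : V}
    (hvm : v ∈ K) (hvo : ∀ w ∈ K, ⟪u - v, w⟫ = 0) : (K.orthogonalProjectionOnto u : V) = v :=
  Submodule.eq_starProjection_of_mem_of_inner_eq_zero hvm hvo

/-- Helper: the inner product of an orthogonal projection with a member of the
subspace equals the inner product of the original vector with that member. -/
lemma proj_inner_aux {V : Type*} [NormedAddCommGroup V] [InnerProductSpace ℝ V]
    (K : Submodule ℝ V) [K.HasOrthogonalProjection] (v w : V) (hw : w ∈ K) :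
    ⟪(Submodule.orthogonalProjectionOnto K v : V), w⟫ = ⟪v, w⟫ := by
  have h := orthogonalProjection_inner_eq_zero v w hw
  rw [inner_sub_left] at h
  linarith

/-- If the configuration `(J, K, D₁, D₂)` is semi-slant with angle
`θ ∈ [0, π/2)` and `Jhat : K → K` is defined by `JhatX = J(PX) + (1/cos θ) • φ(QX)`,
where `P, Q` are the orthogonal projections of `K` onto `D₁` and `D₂`, then
`Jhat(JhatX) = -X` for every `X ∈ K`, i.e. `Jhat` is a complex structure on `K`. -/
theorem stmt_6 {V : Type*} [NormedAddCommGroup V] [InnerProductSpace ℝ V]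
    [FiniteDimensional ℝ V]
    (J : V →ₗ[ℝ] V) (hJiso : ∀ v : V, ‖J v‖ = ‖v‖) (hJ2 : ∀ v : V, J (J v) = -v)
    (K : Submodule ℝ V)
    (φ : K → K)
    (hφ : ∀ X : K, φ X = Submodule.orthogonalProjectionOnto K (J (X : V)))
    (D₁ D₂ : Submodule ℝ V) (hD₁K : D₁ ≤ K) (hJD₁ : D₁.map J = D₁)
    (hD₂ : D₂ = D₁ᗮ ⊓ K)
    (θ : ℝ) (hθ : θ ∈ Set.Ico 0 (Real.pi / 2))
    (hslant : ∀ X : V, X ∈ D₂ → X ≠ 0 →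
      InnerProductGeometry.angle (J X) (Submodule.orthogonalProjectionOnto D₂ (J X) : V) = θ)
    (P Q : K → K)
    (hP : ∀ X : K, (P X : V) = Submodule.orthogonalProjectionOnto D₁ (X : V))
    (hQ : ∀ X : K, (Q X : V) = Submodule.orthogonalProjectionOnto D₂ (X : V))
    (Jhat : K → K)
    (hJhat : ∀ X : K, (Jhat X : V) = J (P X : V) + (1 / Real.cos θ) • (φ (Q X) : V)) :
    ∀ X : K, Jhat (Jhat X) = -X := by
  obtain ⟨hθ0, hθ2⟩ := hθ
  have hc : 0 < Real.cos θ :=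
    Real.cos_pos_of_mem_Ioo ⟨by linarith [Real.pi_pos], hθ2⟩
  set c := Real.cos θ with hcdef
  -- J preserves inner products and is skew-adjoint
  have hinner : ∀ x y : V, ⟪J x, J y⟫ = ⟪x, y⟫ := by
    intro x y
    rw [real_inner_eq_norm_add_mul_self_sub_norm_mul_self_sub_norm_mul_self_div_two,
        real_inner_eq_norm_add_mul_self_sub_norm_mul_self_sub_norm_mul_self_div_two x y,
        ← map_add, hJiso, hJiso, hJiso]
  have hskew : ∀ x y : V, ⟪J x, y⟫ = -⟪x, J y⟫ := by
    intro x y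
    have h := hinner x (J y)
    rw [hJ2, inner_neg_right] at h
    linarith
  -- basic subspace facts
  have hD₂K : D₂ ≤ K := by rw [hD₂]; exact inf_le_right
  have hD₂D₁o : D₂ ≤ D₁ᗮ := by rw [hD₂]; exact inf_le_left
  have horth : ∀ x ∈ D₂, ∀ y ∈ D₁, ⟪x, y⟫ = 0 := by
    intro x hx y hy
    rw [real_inner_comm]
    exact (Submodule.mem_orthogonal D₁ x).1 (hD₂D₁o hx) y hy
  have hJD₁mem : ∀ y ∈ D₁, J y ∈ D₁ := by
    intro y hy
    rw [← hJD₁]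
    exact Submodule.mem_map_of_mem hy
  -- the operator T = proj_{D₂} ∘ J
  set T : V → V := fun v => (Submodule.orthogonalProjectionOnto D₂ (J v) : V) with hT
  have hTmem : ∀ v : V, T v ∈ D₂ := fun v => (Submodule.orthogonalProjectionOnto D₂ (J v)).2
  have hTadd : ∀ x y : V, T (x + y) = T x + T y := by
    intro x y
    simp only [hT, map_add, Submodule.coe_add]
  have hTsmul : ∀ (a : ℝ) (x : V), T (a • x) = a • T x := by
    intro a x
    simp only [hT, map_smul, SetLike.val_smul]
  -- decomposition of elements of K
  have hdecomp : ∀ w ∈ K, (w - Submodule.orthogonalProjectionOnto D₁ w : V) ∈ D₂ := by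
    intro w hw
    rw [hD₂]
    exact ⟨sub_orthogonalProjection_mem_orthogonal w,
      K.sub_mem hw (hD₁K (Submodule.orthogonalProjectionOnto D₁ w).2)⟩
  -- for x ∈ D₂, the projection of Jx onto K equals T x
  have hTprojK : ∀ x ∈ D₂, (Submodule.orthogonalProjectionOnto K (J x) : V) = T x := by
    intro x hx
    apply eq_orthogonalProjection_of_mem_of_inner_eq_zero (hD₂K (hTmem x))
    intro w hw
    have hw1 : (Submodule.orthogonalProjectionOnto D₁ w : V) ∈ D₁ := (Submodule.orthogonalProjectionOnto D₁ w).2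
    have hw2 : (w - Submodule.orthogonalProjectionOnto D₁ w : V) ∈ D₂ := hdecomp w hw
    have hsplit : w = (Submodule.orthogonalProjectionOnto D₁ w : V) + (w - Submodule.orthogonalProjectionOnto D₁ w) := by
      abel
    rw [hsplit, inner_add_right, inner_sub_left, inner_sub_left]
    have h1 : ⟪J x, (Submodule.orthogonalProjectionOnto D₁ w : V)⟫ = 0 := by
      rw [hskew]
      have := horth x hx _ (hJD₁mem _ hw1)
      linarith
    have h2 : ⟪T x, (Submodule.orthogonalProjectionOnto D₁ w : V)⟫ = 0 := horth _ (hTmem x) _ hw1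
    have h3 := orthogonalProjection_inner_eq_zero (J x) _ hw2
    rw [inner_sub_left] at h3
    linarith
  -- T preserves norms up to factor c on D₂
  have hTnorm : ∀ x ∈ D₂, ‖T x‖ = c * ‖x‖ := by
    intro x hx
    by_cases hx0 : x = 0
    · subst hx0
      simp only [hT, map_zero, ZeroMemClass.coe_zero, norm_zero, mul_zero]
    · have hTx0 : T x ≠ 0 := by
        intro h
        have hang := hslant x hx hx0
        rw [show (Submodule.orthogonalProjectionOnto D₂ (J x) : V) = T x from rfl, h,
          InnerProductGeometry.angle_zero_right] at hang
        linarith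
      have hang := hslant x hx hx0
      have hmul := InnerProductGeometry.cos_angle_mul_norm_mul_norm (J x)
        (Submodule.orthogonalProjectionOnto D₂ (J x) : V)
      rw [hang, hJiso] at hmul
      have hip : ⟪J x, (Submodule.orthogonalProjectionOnto D₂ (J x) : V)⟫ =
          ‖(Submodule.orthogonalProjectionOnto D₂ (J x) : V)‖ * ‖(Submodule.orthogonalProjectionOnto D₂ (J x) : V)‖ := by
        rw [← proj_inner_aux D₂ (J x) _ (hTmem x)]
        exact real_inner_self_eq_norm_mul_norm _
      rw [hip] at hmul
      have hTx0' : ‖(Submodule.orthogonalProjectionOnto D₂ (J x) : V)‖ ≠ 0 := norm_ne_zero_iff.2 hTx0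
      show ‖(Submodule.orthogonalProjectionOnto D₂ (J x) : V)‖ = c * ‖x‖
      apply mul_right_cancel₀ hTx0'
      linarith [hmul]
  -- T preserves inner products up to c² on D₂
  have hTinner : ∀ x ∈ D₂, ∀ y ∈ D₂, ⟪T x, T y⟫ = c ^ 2 * ⟪x, y⟫ := by
    intro x hx y hy
    rw [real_inner_eq_norm_add_mul_self_sub_norm_mul_self_sub_norm_mul_self_div_two,
        real_inner_eq_norm_add_mul_self_sub_norm_mul_self_sub_norm_mul_self_div_two x y,
        ← hTadd, hTnorm _ (D₂.add_mem hx hy), hTnorm _ hx, hTnorm _ hy]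
    ring
  -- T² = -c² on D₂
  have hTT : ∀ x ∈ D₂, T (T x) = (-(c ^ 2)) • x := by
    intro x hx
    have hz : ∀ w ∈ D₂, ⟪T (T x) + (c ^ 2) • x, w⟫ = 0 := by
      intro w hw
      rw [inner_add_left, real_inner_smul_left]
      have h1 : ⟪T (T x), w⟫ = ⟪J (T x), w⟫ := proj_inner_aux D₂ (J (T x)) w hw
      have h2 : ⟪J (T x), w⟫ = -⟪T x, J w⟫ := hskew _ _
      have h3 : ⟪T x, J w⟫ = ⟪T x, T w⟫ := by
        rw [real_inner_comm (J w) (T x), ← proj_inner_aux D₂ (J w) (T x) (hTmem x)]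
        exact real_inner_comm (T x) (T w)
      have h4 : ⟪T x, T w⟫ = c ^ 2 * ⟪x, w⟫ := hTinner x hx w hw
      linarith
    have hmem : T (T x) + (c ^ 2) • x ∈ D₂ := D₂.add_mem (hTmem _) (D₂.smul_mem _ hx)
    have h0 : T (T x) + (c ^ 2) • x = 0 := by
      have := hz _ hmem
      rwa [inner_self_eq_zero] at this
    have := eq_neg_of_add_eq_zero_left h0
    rw [this, neg_smul]
  -- sum of projections onto D₁ and D₂ recovers elements of K
  have hsum : ∀ w ∈ K, (Submodule.orthogonalProjectionOnto D₂ w : V) = w - Submodule.orthogonalProjectionOnto D₁ w := by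
    intro w hw
    apply eq_orthogonalProjection_of_mem_of_inner_eq_zero (hdecomp w hw)
    intro z hz
    rw [sub_sub_cancel]
    rw [real_inner_comm]
    exact horth z hz _ (Submodule.orthogonalProjectionOnto D₁ w).2
  -- main computation
  intro X
  set p : V := (P X : V) with hp
  set q : V := (Q X : V) with hq
  have hpmem : p ∈ D₁ := by rw [hp, hP]; exact (Submodule.orthogonalProjectionOnto D₁ (X : V)).2
  have hqmem : q ∈ D₂ := by rw [hq, hQ]; exact (Submodule.orthogonalProjectionOnto D₂ (X : V)).2
  have hpq : p + q = (X : V) := by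
    rw [hp, hq, hP, hQ, hsum _ X.2]
    abel
  -- value of Jhat X
  have hφQ : (φ (Q X) : V) = T q := by
    rw [hφ]
    exact hTprojK q hqmem
  have hJhatX : (Jhat X : V) = J p + (1 / c) • T q := by
    rw [hJhat, hφQ]
  have hJpmem : J p ∈ D₁ := hJD₁mem p hpmem
  have hsTqmem : (1 / c) • T q ∈ D₂ := D₂.smul_mem _ (hTmem q)
  -- projections of Jhat X
  have hPJhat : (P (Jhat X) : V) = J p := by
    rw [hP, hJhatX]
    apply eq_orthogonalProjection_of_mem_of_inner_eq_zero hJpmem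
    intro z hz
    rw [add_sub_cancel_left]
    exact horth _ hsTqmem z hz
  have hQJhat : (Q (Jhat X) : V) = (1 / c) • T q := by
    rw [hQ, hJhatX]
    apply eq_orthogonalProjection_of_mem_of_inner_eq_zero hsTqmem
    intro z hz
    rw [add_sub_cancel_right]
    rw [real_inner_comm]
    exact horth z hz _ hJpmem
  have hφQJ : (φ (Q (Jhat X)) : V) = T ((1 / c) • T q) := by
    rw [hφ, hQJhat]
    exact hTprojK _ hsTqmem
  have hfinal : (Jhat (Jhat X) : V) = -(X : V) := by
    rw [hJhat, hPJhat, hφQJ, hJ2, hTsmul, hTT q hqmem]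
    rw [smul_smul, smul_smul]
    have hcne : c ≠ 0 := ne_of_gt hc
    have h1 : 1 / c * (1 / c) * -c ^ 2 = -1 := by
      field_simp
    rw [h1, neg_one_smul, ← hpq]
    abel
  exact Subtype.ext (by rw [hfinal]; rfl)
end

section
/- Suppose the configuration (J, K, D₁, D₂) is semi-slant with angle θ and θ ∈ [0, π/2). Then the dimension of K is even. -/
open Module

/-- A real inner product space admitting an injective skew-adjoint endomorphism is
even-dimensional. -/
lemma even_finrank_of_skew_inj {W : Type*} [NormedAddCommGroup W] [InnerProductSpace ℝ W]
    [FiniteDimensional ℝ W] (f : W →ₗ[ℝ] W)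
    (hskew : ∀ x y : W, inner ℝ (f x) y = -(inner ℝ x (f y) : ℝ))
    (hinj : Function.Injective f) :
    Even (Module.finrank ℝ W) := by
  set n := Module.finrank ℝ W with hn
  let b := stdOrthonormalBasis ℝ W
  set M := LinearMap.toMatrix b.toBasis b.toBasis f with hM
  have hMentry : ∀ i j, M i j = inner ℝ (b i) (f (b j)) := by
    intro i j
    rw [hM, LinearMap.toMatrix_apply, b.coe_toBasis, b.coe_toBasis_repr_apply,
      b.repr_apply_apply]
  have hMT : M.transpose = -M := by
    ext i j
    rw [Matrix.transpose_apply, Matrix.neg_apply, hMentry, hMentry]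
    linarith [hskew (b i) (b j), real_inner_comm (f (b i)) (b j)]
  have hdet : LinearMap.det f = M.det := (LinearMap.det_toMatrix _ f).symm
  have hbij : Function.Bijective f :=
    ⟨hinj, (LinearMap.injective_iff_surjective).mp hinj⟩
  have hunit : IsUnit (LinearMap.det f) := by
    have := (LinearEquiv.ofBijective f hbij).isUnit_det'
    convert this using 1
    all_goals rfl
  have hdet_ne : M.det ≠ 0 := by
    rw [← hdet]; exact hunit.ne_zero
  have hkey : M.det = (-1 : ℝ) ^ n * M.det := by
    calc M.det = M.transpose.det := (Matrix.det_transpose M).symm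
    _ = (-M).det := by rw [hMT]
    _ = (-1 : ℝ) ^ n * M.det := by
        rw [Matrix.det_neg]; simp [hn]
  have hpow : ((-1 : ℝ) ^ n) = 1 := by
    have h := mul_right_cancel₀ hdet_ne
      (show ((-1 : ℝ) ^ n) * M.det = 1 * M.det by rw [one_mul]; linarith)
    exact h
  exact (neg_one_pow_eq_one_iff_even (by norm_num : (-1 : ℝ) ≠ 1)).mp hpow

/-- If the configuration `(J, K, D₁, D₂)` is semi-slant with angle
`θ ∈ [0, π/2)`, then the dimension of `K` is even. -/
theorem stmt_7 {V : Type*} [NormedAddCommGroup V] [InnerProductSpace ℝ V]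
    [FiniteDimensional ℝ V]
    (J : V →ₗ[ℝ] V) (hJiso : ∀ v : V, ‖J v‖ = ‖v‖) (hJ2 : ∀ v : V, J (J v) = -v)
    (K : Submodule ℝ V)
    (D₁ D₂ : Submodule ℝ V) (hD₁K : D₁ ≤ K) (hJD₁ : D₁.map J = D₁)
    (hD₂ : D₂ = D₁ᗮ ⊓ K)
    (θ : ℝ) (hθ : θ ∈ Set.Ico 0 (Real.pi / 2))
    (hslant : ∀ X : V, X ∈ D₂ → X ≠ 0 →
      InnerProductGeometry.angle (J X) (D₂.orthogonalProjectionOnto (J X) : V) = θ) :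
    Even (Module.finrank ℝ K) := by
  -- J preserves inner products
  have hJinner : ∀ v w : V, (inner ℝ (J v) (J w) : ℝ) = inner ℝ v w :=
    fun v w => LinearIsometry.inner_map_map ⟨J, hJiso⟩ v w
  -- J is skew-adjoint
  have hJskew : ∀ v w : V, (inner ℝ (J v) w : ℝ) = -(inner ℝ v (J w) : ℝ) := by
    intro v w
    have h := hJinner v (J w)
    rw [hJ2, inner_neg_right] at h
    linarith
  -- J is injective
  have hJinj : Function.Injective J := by
    intro x y hxy
    have : J (J x) = J (J y) := by rw [hxy]
    rw [hJ2, hJ2] at this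
    exact neg_injective this
  -- D₁ is even-dimensional: restrict J to D₁
  have hJmem : ∀ x ∈ D₁, J x ∈ D₁ := by
    intro x hx
    rw [← hJD₁]
    exact Submodule.mem_map_of_mem hx
  have hevenD₁ : Even (Module.finrank ℝ D₁) := by
    apply even_finrank_of_skew_inj (J.restrict hJmem)
    · intro x y
      simp only [Submodule.coe_inner, LinearMap.restrict_coe_apply]
      exact hJskew x y
    · intro x y hxy
      have : J (x : V) = J (y : V) := congrArg Subtype.val hxy
      exact Subtype.ext (hJinj this)
  -- D₂ is even-dimensional: use φ = proj_{D₂} ∘ J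
  have hevenD₂ : Even (Module.finrank ℝ D₂) := by
    set φ : D₂ →ₗ[ℝ] D₂ :=
      (D₂.orthogonalProjectionOnto).toLinearMap ∘ₗ (J ∘ₗ D₂.subtype) with hφ
    have hφapply : ∀ x : D₂, φ x = D₂.orthogonalProjectionOnto (J (x : V)) := fun x => rfl
    apply even_finrank_of_skew_inj φ
    · intro x y
      have h1 : (inner ℝ (φ x) y : ℝ) = inner ℝ (J (x : V)) ((y : V)) :=
        Submodule.inner_orthogonalProjectionOnto_eq_of_mem_right y (J (x : V))
      have h2 : (inner ℝ x (φ y) : ℝ) = inner ℝ ((x : V)) (J (y : V)) :=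
        Submodule.inner_orthogonalProjectionOnto_eq_of_mem_left x (J (y : V))
      rw [h1, h2]
      exact hJskew _ _
    · rw [← LinearMap.ker_eq_bot, Submodule.eq_bot_iff]
      intro x hx
      by_contra hx0
      have hxV : (x : V) ≠ 0 := fun h => hx0 (Subtype.ext h)
      have hang := hslant (x : V) x.2 hxV
      have hproj : D₂.orthogonalProjectionOnto (J (x : V)) = 0 := hx
      rw [hproj] at hang
      rw [Submodule.coe_zero, InnerProductGeometry.angle_zero_right] at hang
      exact absurd hang.symm (ne_of_lt hθ.2)
  have hsum := Submodule.finrank_add_inf_finrank_orthogonal hD₁K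
  rw [← hD₂] at hsum
  rw [← hsum]
  exact hevenD₁.add hevenD₂
end

section
/- Suppose dim V is even and the configuration (J, K, D₁, D₂) is semi-slant with angle θ ∈ [0, π/2). Then the dimension of the orthogonal complement Kᗮ is even. -/
open Module
open scoped RealInnerProductSpace

/-- A skew-symmetric injective endomorphism of a finite-dimensional real inner product
space forces the dimension to be even. -/
lemma even_finrank_of_skew_injective {W : Type*} [NormedAddCommGroup W]
    [InnerProductSpace ℝ W] [FiniteDimensional ℝ W] (f : W →ₗ[ℝ] W)
    (hskew : ∀ x y : W, ⟪f x, y⟫ = -⟪x, f y⟫)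
    (hinj : Function.Injective f) : Even (Module.finrank ℝ W) := by
  have hadj : LinearMap.adjoint f = -f := by
    symm
    rw [LinearMap.eq_adjoint_iff]
    intro x y
    simp [hskew x y]
  -- determinant of adjoint equals determinant
  let b := stdOrthonormalBasis ℝ W
  have hdet_adj : LinearMap.det (LinearMap.adjoint f) = LinearMap.det f := by
    rw [← LinearMap.det_toMatrix b.toBasis, ← LinearMap.det_toMatrix b.toBasis,
      LinearMap.toMatrix_adjoint b b, Matrix.det_conjTranspose]
    simp
  have hdet_neg : LinearMap.det (-f) = (-1 : ℝ) ^ (Module.finrank ℝ W) * LinearMap.det f := by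
    rw [show (-f) = (-1 : ℝ) • f by simp, LinearMap.det_smul]
  have hbij : Function.Bijective f :=
    ⟨hinj, (LinearMap.injective_iff_surjective_of_finrank_eq_finrank rfl).mp hinj⟩
  have hne : LinearMap.det f ≠ 0 := by
    have : IsUnit (LinearMap.det (LinearEquiv.ofBijective f hbij : W →ₗ[ℝ] W)) := by
      simpa using (LinearEquiv.ofBijective f hbij).isUnit_det'
    simpa [show (LinearEquiv.ofBijective f hbij : W →ₗ[ℝ] W) = f from LinearMap.ext fun _ => rfl] using this.ne_zero
  have h1 : (-1 : ℝ) ^ (Module.finrank ℝ W) = 1 := by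
    have h := hdet_adj
    rw [hadj, hdet_neg] at h
    have h' : (-1 : ℝ) ^ (Module.finrank ℝ W) * LinearMap.det f = 1 * LinearMap.det f := by
      rw [one_mul]; linarith
    exact mul_right_cancel₀ hne h'
  exact (neg_one_pow_eq_one_iff_even (by norm_num : (-1 : ℝ) ≠ 1)).mp h1

/-- If `dim V` is even and the configuration `(J, K, D₁, D₂)` is
semi-slant with angle `θ ∈ [0, π/2)`, then the dimension of `Kᗮ` is even. -/
theorem stmt_8 {V : Type*} [NormedAddCommGroup V] [InnerProductSpace ℝ V]
    [FiniteDimensional ℝ V]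
    (hV : Even (Module.finrank ℝ V))
    (J : V →ₗ[ℝ] V) (hJiso : ∀ v : V, ‖J v‖ = ‖v‖) (hJ2 : ∀ v : V, J (J v) = -v)
    (K : Submodule ℝ V)
    (D₁ D₂ : Submodule ℝ V) (hD₁K : D₁ ≤ K) (hJD₁ : D₁.map J = D₁)
    (hD₂ : D₂ = D₁ᗮ ⊓ K)
    (θ : ℝ) (hθ : θ ∈ Set.Ico 0 (Real.pi / 2))
    (hslant : ∀ X : V, X ∈ D₂ → X ≠ 0 →
      InnerProductGeometry.angle (J X) (D₂.orthogonalProjectionOnto (J X) : V) = θ) :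
    Even (Module.finrank ℝ Kᗮ) := by
  -- J is injective
  have hJinj : Function.Injective J := by
    intro x y h
    have := congrArg J h
    rw [hJ2, hJ2] at this
    exact neg_injective this
  -- J preserves the inner product, hence is skew-adjoint
  have hJinner : ∀ x y : V, ⟪J x, J y⟫ = ⟪x, y⟫ := by
    intro x y
    exact LinearIsometry.inner_map_map ⟨J, hJiso⟩ x y
  have hJskew : ∀ x y : V, ⟪J x, y⟫ = -⟪x, J y⟫ := by
    intro x y
    have : ⟪J x, J (J y)⟫ = ⟪x, J y⟫ := hJinner x (J y)
    rw [hJ2, inner_neg_right] at this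
    linarith
  -- dim D₁ is even
  have hJD₁le : ∀ x ∈ D₁, J x ∈ D₁ := by
    intro x hx
    rw [← hJD₁]
    exact Submodule.mem_map_of_mem hx
  have hD₁even : Even (Module.finrank ℝ D₁) := by
    apply even_finrank_of_skew_injective (J.restrict hJD₁le)
    · intro x y
      have : ⟪J (x : V), (y : V)⟫ = -⟪(x : V), J (y : V)⟫ := hJskew x y
      simpa [Submodule.coe_inner, LinearMap.restrict_apply] using this
    · intro x y h
      have : J (x : V) = J (y : V) := congrArg Subtype.val h
      exact Subtype.ext (hJinj this)
  -- dim D₂ is even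
  have hD₂even : Even (Module.finrank ℝ D₂) := by
    set f : D₂ →ₗ[ℝ] D₂ :=
      (D₂.orthogonalProjectionOnto : V →ₗ[ℝ] D₂).comp (J.comp D₂.subtype) with hf
    have hproj_inner : ∀ (v : V) (y : D₂),
        ⟪(D₂.orthogonalProjectionOnto v : V), (y : V)⟫ = ⟪v, (y : V)⟫ := by
      intro v y
      have h0 : ⟪v - (D₂.orthogonalProjectionOnto v : V), (y : V)⟫ = 0 :=
        Submodule.starProjection_inner_eq_zero v y y.2
      rw [inner_sub_left] at h0
      linarith
    apply even_finrank_of_skew_injective f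
    · intro x y
      show ⟪((D₂.orthogonalProjectionOnto (J (x : V))) : V), (y : V)⟫
          = -⟪(x : V), ((D₂.orthogonalProjectionOnto (J (y : V))) : V)⟫
      have h1 := hproj_inner (J (x : V)) y
      have h2 := hproj_inner (J (y : V)) x
      have h3 := hJskew (x : V) (y : V)
      have h4 := real_inner_comm (x : V)
        ((D₂.orthogonalProjectionOnto (J (y : V)) : V))
      have h5 := real_inner_comm (x : V) (J (y : V))
      linarith
    · rw [← LinearMap.ker_eq_bot, Submodule.eq_bot_iff]
      intro x hx
      by_contra hxne
      have hx0 : (x : V) ≠ 0 := fun h => hxne (Subtype.ext h)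
      have hang := hslant (x : V) x.2 hx0
      have hproj0 : (D₂.orthogonalProjectionOnto (J (x : V)) : V) = 0 := by
        have : f x = 0 := hx
        have := congrArg (Subtype.val) this
        simpa [hf] using this
      rw [hproj0, InnerProductGeometry.angle_zero_right] at hang
      have := hθ.2
      rw [hang] at this
      exact lt_irrefl _ this
  -- dim K = dim D₁ + dim D₂
  have hK : Module.finrank ℝ D₁ + Module.finrank ℝ D₂ = Module.finrank ℝ K := by
    rw [hD₂]
    exact Submodule.finrank_add_inf_finrank_orthogonal hD₁K
  have hKeven : Even (Module.finrank ℝ K) := by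
    rw [← hK]; exact hD₁even.add hD₂even
  have hsum : Module.finrank ℝ K + Module.finrank ℝ Kᗮ = Module.finrank ℝ V :=
    Submodule.finrank_add_finrank_orthogonal K
  rcases hV with ⟨n, hn⟩
  rcases hKeven with ⟨m, hm⟩
  refine ⟨n - m, ?_⟩
  omega
end

section
/- Let D₁ be a subspace of K with J(D₁) = D₁ and D₂ the orthogonal complement of D₁ in K, and let ω(D₂) = {ωX : X ∈ D₂} ⊆ Kᗮ. Let μ be the orthogonal complement of ω(D₂) inside Kᗮ. Then μ is invariant under J, i.e. J(μ) = μ; consequently Kᗮ is the orthogonal direct sum of ω(D₂) and the J-invariant subspace μ. -/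
open RealInnerProductSpace

/-- With `W = ω(D₂) = {ωX : X ∈ D₂} ⊆ Kᗮ` and `μ` the orthogonal
complement of `W` inside `Kᗮ`, the subspace `μ` is invariant under `J`, i.e.
`J(μ) = μ`; consequently `Kᗮ` is the orthogonal direct sum of `ω(D₂)` and the
`J`-invariant subspace `μ`. -/
theorem stmt_9 {V : Type*} [NormedAddCommGroup V] [InnerProductSpace ℝ V]
    [FiniteDimensional ℝ V]
    (J : V →ₗ[ℝ] V) (hJiso : ∀ v : V, ‖J v‖ = ‖v‖) (hJ2 : ∀ v : V, J (J v) = -v)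
    (K : Submodule ℝ V)
    (φ : K → K) (ω : K → Kᗮ)
    (hφ : ∀ X : K, φ X = Submodule.orthogonalProjection K (J (X : V)))
    (hω : ∀ X : K, ω X = Submodule.orthogonalProjection Kᗮ (J (X : V)))
    (D₁ D₂ : Submodule ℝ V) (hD₁K : D₁ ≤ K) (hJD₁ : D₁.map J = D₁)
    (hD₂ : D₂ = D₁ᗮ ⊓ K)
    (W : Submodule ℝ V)
    (hW : ∀ v : V, v ∈ W ↔ ∃ X : K, (X : V) ∈ D₂ ∧ (ω X : V) = v)
    (μ : Submodule ℝ V) (hμ : μ = Wᗮ ⊓ Kᗮ) :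
    μ.map J = μ ∧
    (∀ w ∈ W, ∀ m ∈ μ, inner ℝ w m = (0 : ℝ)) ∧
    W ⊔ μ = Kᗮ := by
  -- J preserves inner products
  have hJi : ∀ x y : V, ⟪J x, J y⟫ = ⟪x, y⟫ := by
    intro x y
    have h1 := hJiso (x + y)
    have h2 := hJiso x
    have h3 := hJiso y
    rw [map_add] at h1
    have e1 : ⟪J x + J y, J x + J y⟫ = ⟪x + y, x + y⟫ := by
      rw [real_inner_self_eq_norm_sq, real_inner_self_eq_norm_sq, h1]
    simp only [inner_add_add_self] at e1
    have e2 : ⟪J x, J x⟫ = ⟪x, x⟫ := by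
      rw [real_inner_self_eq_norm_sq, real_inner_self_eq_norm_sq, h2]
    have e3 : ⟪J y, J y⟫ = ⟪y, y⟫ := by
      rw [real_inner_self_eq_norm_sq, real_inner_self_eq_norm_sq, h3]
    have c1 : ⟪J x, J y⟫ = ⟪J y, J x⟫ := real_inner_comm _ _
    have c2 : ⟪x, y⟫ = ⟪y, x⟫ := real_inner_comm _ _
    linarith
  have hJskew : ∀ x y : V, ⟪J x, y⟫ = -⟪x, J y⟫ := by
    intro x y
    have : ⟪J x, J (J y)⟫ = ⟪x, J y⟫ := hJi x (J y)
    rw [hJ2 y, inner_neg_right] at this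
    linarith
  -- W ≤ Kᗮ
  have hWle : W ≤ Kᗮ := by
    intro w hw
    rcases (hW w).1 hw with ⟨X, _, hX⟩
    exact hX ▸ (ω X).2
  -- decomposition of J on K
  have hdecomp : ∀ X : K, J (X : V) = ((φ X : K) : V) + ((ω X : Kᗮ) : V) := by
    intro X
    rw [hφ, hω]
    exact (K.starProjection_add_starProjection_orthogonal (J (X : V))).symm
  -- key: J maps μ into μ
  have hJμ : ∀ m ∈ μ, J m ∈ μ := by
    intro m hm
    rw [hμ, Submodule.mem_inf] at hm ⊢
    obtain ⟨hmW, hmK⟩ := hm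
    -- first: J m ∈ Kᗮ
    have hJmK : J m ∈ Kᗮ := by
      rw [Submodule.mem_orthogonal]
      intro u hu
      -- K = D₁ ⊔ D₂
      have hK : D₁ ⊔ D₂ = K := by
        rw [hD₂]; exact Submodule.sup_orthogonal_inf_of_hasOrthogonalProjection hD₁K
      rw [← hK, Submodule.mem_sup] at hu
      obtain ⟨a, ha, b, hb, rfl⟩ := hu
      have haK : J a ∈ K := hD₁K (hJD₁ ▸ Submodule.mem_map_of_mem ha)
      have hbK : b ∈ K := (hD₂ ▸ hb).2
      have hJb : J b = ((φ ⟨b, hbK⟩ : K) : V) + ((ω ⟨b, hbK⟩ : Kᗮ) : V) :=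
        hdecomp ⟨b, hbK⟩
      have h1 : ⟪J a + J b, m⟫ = 0 := by
        rw [inner_add_left]
        have ha0 : ⟪J a, m⟫ = 0 := hmK _ haK
        have hb0 : ⟪J b, m⟫ = 0 := by
          rw [hJb, inner_add_left]
          have hφ0 : ⟪((φ ⟨b, hbK⟩ : K) : V), m⟫ = 0 := hmK _ (φ ⟨b, hbK⟩).2
          have hω0 : ⟪((ω ⟨b, hbK⟩ : Kᗮ) : V), m⟫ = 0 := by
            apply hmW
            exact (hW _).2 ⟨⟨b, hbK⟩, hb, rfl⟩
          rw [hφ0, hω0]; ring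
        rw [ha0, hb0]; ring
      have : ⟪a + b, J m⟫ = -⟪J (a + b), m⟫ := by
        have := hJskew (a + b) m
        linarith [hJskew (a+b) m]
      rw [this, map_add, h1, neg_zero]
    refine ⟨?_, hJmK⟩
    rw [Submodule.mem_orthogonal]
    intro w hw
    rcases (hW w).1 hw with ⟨X, hXD₂, rfl⟩
    have hωX : ((ω X : Kᗮ) : V) = J (X : V) - ((φ X : K) : V) := by
      rw [hdecomp X]; abel
    rw [hωX, inner_sub_left]
    have h1 : ⟪J (X : V), J m⟫ = ⟪(X : V), m⟫ := hJi _ _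
    have h2 : ⟪(X : V), m⟫ = 0 := hmK _ X.2
    have h3 : ⟪((φ X : K) : V), J m⟫ = 0 :=
      (Submodule.mem_orthogonal K (J m)).1 hJmK _ (φ X).2
    rw [h1, h2, h3]; ring
  refine ⟨?_, ?_, ?_⟩
  · apply le_antisymm
    · rintro _ ⟨m, hm, rfl⟩
      exact hJμ m hm
    · intro m hm
      have hJm : J m ∈ μ := hJμ m hm
      have hJJm : J (-(J m)) = m := by rw [map_neg, hJ2, neg_neg]
      exact ⟨-(J m), neg_mem hJm, hJJm⟩
  · intro w hw m hm
    have hmW : m ∈ Wᗮ := (hμ ▸ hm : m ∈ Wᗮ ⊓ Kᗮ).1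
    exact (Submodule.mem_orthogonal W m).1 hmW w hw
  · rw [hμ]
    exact Submodule.sup_orthogonal_inf_of_hasOrthogonalProjection hWle
end

section
/- Fix α ∈ (0, π/2) and let F : ℝ⁶ → ℝ² be the linear map F(x₁,…,x₆) = (x₃ sin α − x₅ cos α, x₆). Then: (i) F is surjective and ‖F(v)‖ = ‖v‖ for every v in the orthogonal complement of ker F (so F is a Riemannian submersion of Euclidean spaces); (ii) ker F is the orthogonal direct sum of D₁ = span{e₁, e₂} and D₂ = span{e₄, cos α · e₃ + sin α · e₅}; (iii) J(D₁) = D₁; (iv) for every nonzero X ∈ D₂, the angle between JX and the orthogonal projection of JX onto D₂ equals α. Hence F is a semi-slant submersion with semi-slant angle α. -/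
/-- Example 3.5: For `α ∈ (0, π/2)`, the map
`F : ℝ⁶ → ℝ², F(x) = (x₃ sin α − x₅ cos α, x₆)` is a Riemannian submersion which is
semi-slant with semi-slant angle `α`, where `J` is the standard complex structure
(`J e_{2i-1} = e_{2i}`, `J e_{2i} = -e_{2i-1}`, written here in 0-indexed coordinates),
`D₁ = span{e₁, e₂}` and `D₂ = span{e₄, cos α · e₃ + sin α · e₅}` (1-indexed). -/
theorem stmt_11 (α : ℝ) (hα : α ∈ Set.Ioo 0 (Real.pi / 2))
    (J : EuclideanSpace ℝ (Fin 6) →ₗ[ℝ] EuclideanSpace ℝ (Fin 6))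
    (hJ : ∀ (x : EuclideanSpace ℝ (Fin 6)) (k : Fin 6),
      J x k = if k.val % 2 = 0 then -(x (k + 1)) else x (k - 1))
    (F : EuclideanSpace ℝ (Fin 6) →ₗ[ℝ] EuclideanSpace ℝ (Fin 2))
    (hF : ∀ x : EuclideanSpace ℝ (Fin 6),
      F x 0 = x 2 * Real.sin α - x 4 * Real.cos α ∧ F x 1 = x 5)
    (D₁ D₂ : Submodule ℝ (EuclideanSpace ℝ (Fin 6)))
    (hD₁ : D₁ = Submodule.span ℝ
      {EuclideanSpace.single 0 (1 : ℝ), EuclideanSpace.single 1 (1 : ℝ)})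
    (hD₂ : D₂ = Submodule.span ℝ
      {EuclideanSpace.single 3 (1 : ℝ),
       Real.cos α • EuclideanSpace.single 2 (1 : ℝ)
         + Real.sin α • EuclideanSpace.single 4 (1 : ℝ)}) :
    Function.Surjective F ∧
    (∀ v ∈ (LinearMap.ker F)ᗮ, ‖F v‖ = ‖v‖) ∧
    LinearMap.ker F = D₁ ⊔ D₂ ∧
    (∀ x ∈ D₁, ∀ y ∈ D₂, inner ℝ x y = (0 : ℝ)) ∧
    D₁.map J = D₁ ∧
    (∀ X ∈ D₂, X ≠ 0 →
      InnerProductGeometry.angle (J X)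
        (Submodule.orthogonalProjection D₂ (J X) : EuclideanSpace ℝ (Fin 6)) = α) := by
  obtain ⟨hα0, hα2⟩ := hα
  have hπ := Real.pi_pos
  have hs : 0 < Real.sin α := Real.sin_pos_of_pos_of_lt_pi hα0 (by linarith)
  have hc : 0 < Real.cos α := Real.cos_pos_of_mem_Ioo ⟨by linarith, hα2⟩
  have hsc : Real.sin α ^ 2 + Real.cos α ^ 2 = 1 := Real.sin_sq_add_cos_sq α
  set s := Real.sin α with hsdef
  set c := Real.cos α with hcdef
  -- the second generator of D₂
  set w : EuclideanSpace ℝ (Fin 6) :=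
    c • EuclideanSpace.single 2 (1 : ℝ) + s • EuclideanSpace.single 4 (1 : ℝ) with hw
  have hwcoord : ∀ k : Fin 6, w k =
      (if k = 2 then c else 0) + (if k = 4 then s else 0) := by
    intro k
    simp [hw, EuclideanSpace.single_apply]
  -- membership in the kernel from coordinate equations
  have hker_of : ∀ x : EuclideanSpace ℝ (Fin 6),
      x 2 * s - x 4 * c = 0 → x 5 = 0 → x ∈ LinearMap.ker F := by
    intro x h1 h2
    rw [LinearMap.mem_ker]
    refine PiLp.ext fun i => ?_
    fin_cases i
    · show F x 0 = 0
      rw [(hF x).1, h1]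
    · show F x 1 = 0
      rw [(hF x).2, h2]
  have hk0 : EuclideanSpace.single 0 (1:ℝ) ∈ LinearMap.ker F := by
    refine hker_of _ ?_ ?_ <;> simp [EuclideanSpace.single_apply]
  have hk1 : EuclideanSpace.single 1 (1:ℝ) ∈ LinearMap.ker F := by
    refine hker_of _ ?_ ?_ <;> simp [EuclideanSpace.single_apply]
  have hk3 : EuclideanSpace.single 3 (1:ℝ) ∈ LinearMap.ker F := by
    refine hker_of _ ?_ ?_ <;> simp [EuclideanSpace.single_apply]
  have hkw : w ∈ LinearMap.ker F := by
    refine hker_of _ ?_ ?_ <;> simp [hwcoord] <;> ring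
  -- Surjectivity
  have hsurj : Function.Surjective F := by
    intro y
    refine ⟨(y 0 * s) • EuclideanSpace.single 2 (1:ℝ)
      + (-(y 0 * c)) • EuclideanSpace.single 4 (1:ℝ)
      + (y 1) • EuclideanSpace.single 5 (1:ℝ), ?_⟩
    refine PiLp.ext fun i => ?_
    fin_cases i
    · show F _ 0 = y 0
      rw [(hF _).1]
      simp [EuclideanSpace.single_apply]
      linear_combination y 0 * hsc
    · show F _ 1 = y 1
      rw [(hF _).2]
      simp [EuclideanSpace.single_apply]
  -- kernel equals D₁ ⊔ D₂
  have hkerD : LinearMap.ker F = D₁ ⊔ D₂ := by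
    apply le_antisymm
    · intro x hx
      rw [LinearMap.mem_ker] at hx
      have h1 : x 2 * s - x 4 * c = 0 := by
        have := (hF x).1
        rw [hx] at this
        simpa using this.symm
      have h2 : x 5 = 0 := by
        have := (hF x).2
        rw [hx] at this
        simpa using this.symm
      have hx24 : x 2 * s = x 4 * c := by linarith
      have e2 : x 2 = (x 2 * c + x 4 * s) * c := by
        linear_combination (-(x 2)) * hsc + s * hx24
      have e4 : x 4 = (x 2 * c + x 4 * s) * s := by
        linear_combination (-(x 4)) * hsc + (-c) * hx24
      have hdecomp : x = ((x 0) • EuclideanSpace.single 0 (1:ℝ)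
          + (x 1) • EuclideanSpace.single 1 (1:ℝ))
          + ((x 3) • EuclideanSpace.single 3 (1:ℝ) + (x 2 * c + x 4 * s) • w) := by
        refine PiLp.ext fun i => ?_
        fin_cases i <;>
          simp [hwcoord, EuclideanSpace.single_apply, h2] <;> linarith [e2, e4]
      rw [hdecomp]
      refine Submodule.add_mem _ (Submodule.mem_sup_left ?_) (Submodule.mem_sup_right ?_)
      · rw [hD₁]
        exact Submodule.add_mem _
          (Submodule.smul_mem _ _ (Submodule.subset_span (by simp)))
          (Submodule.smul_mem _ _ (Submodule.subset_span (by simp)))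
      · rw [hD₂]
        exact Submodule.add_mem _
          (Submodule.smul_mem _ _ (Submodule.subset_span (by simp)))
          (Submodule.smul_mem _ _ (Submodule.subset_span (by simp)))
    · refine sup_le ?_ ?_
      · rw [hD₁, Submodule.span_le]
        rintro z (rfl | rfl)
        · exact hk0
        · exact hk1
      · rw [hD₂, Submodule.span_le]
        rintro z (rfl | rfl)
        · exact hk3
        · exact hkw
  -- orthogonality of D₁ and D₂
  have horth : ∀ x ∈ D₁, ∀ y ∈ D₂, inner ℝ x y = (0 : ℝ) := by
    intro x hx y hy
    rw [hD₁, Submodule.mem_span_pair] at hx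
    rw [hD₂, Submodule.mem_span_pair] at hy
    obtain ⟨a, b, rfl⟩ := hx
    obtain ⟨u, v, rfl⟩ := hy
    simp [PiLp.inner_apply, Fin.sum_univ_six, EuclideanSpace.single_apply, hwcoord]
  -- norm preservation on the orthogonal complement of the kernel
  have hiso : ∀ v ∈ (LinearMap.ker F)ᗮ, ‖F v‖ = ‖v‖ := by
    intro v hv
    have hio := (Submodule.mem_orthogonal _ v).1 hv
    have h0 : v 0 = 0 := by
      have := hio _ hk0
      simpa [PiLp.inner_apply, Fin.sum_univ_six, EuclideanSpace.single_apply] using this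
    have h1 : v 1 = 0 := by
      have := hio _ hk1
      simpa [PiLp.inner_apply, Fin.sum_univ_six, EuclideanSpace.single_apply] using this
    have h3 : v 3 = 0 := by
      have := hio _ hk3
      simpa [PiLp.inner_apply, Fin.sum_univ_six, EuclideanSpace.single_apply] using this
    have h24 : c * v 2 + s * v 4 = 0 := by
      have := hio _ hkw
      simp [PiLp.inner_apply, Fin.sum_univ_six, hwcoord] at this; linarith
    rw [EuclideanSpace.norm_eq, EuclideanSpace.norm_eq]
    congr 1
    rw [Fin.sum_univ_two, Fin.sum_univ_six, (hF v).1, (hF v).2]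
    simp only [Real.norm_eq_abs, sq_abs]
    rw [h0, h1, h3]
    linear_combination (v 2 ^ 2 + v 4 ^ 2) * hsc - (c * v 2 + s * v 4) * h24
  -- J maps D₁ onto D₁
  have hJ0 : J (EuclideanSpace.single 0 (1:ℝ)) = EuclideanSpace.single 1 (1:ℝ) := by
    refine PiLp.ext fun k => ?_
    rw [hJ]
    fin_cases k <;> simp [EuclideanSpace.single_apply]
  have hJ1 : J (EuclideanSpace.single 1 (1:ℝ)) = -EuclideanSpace.single 0 (1:ℝ) := by
    refine PiLp.ext fun k => ?_
    rw [hJ]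
    fin_cases k <;> simp [EuclideanSpace.single_apply]
  have hmap : D₁.map J = D₁ := by
    rw [hD₁, Submodule.map_span, Set.image_insert_eq, Set.image_singleton, hJ0, hJ1]
    apply le_antisymm <;> rw [Submodule.span_le] <;> rintro z (rfl | rfl)
    · exact Submodule.subset_span (by simp)
    · exact Submodule.neg_mem _ (Submodule.subset_span (by simp))
    · have hmm : -(-EuclideanSpace.single 0 (1:ℝ)) ∈ Submodule.span ℝ
          {EuclideanSpace.single (1 : Fin 6) (1:ℝ), -EuclideanSpace.single (0 : Fin 6) (1:ℝ)} :=
        Submodule.neg_mem _ (Submodule.subset_span (by simp))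
      simpa using hmm
    · exact Submodule.subset_span (by simp)
  -- the slant angle
  have hangle : ∀ X ∈ D₂, X ≠ 0 →
      InnerProductGeometry.angle (J X)
        (Submodule.orthogonalProjection D₂ (J X) : EuclideanSpace ℝ (Fin 6)) = α := by
    intro X hX hX0
    rw [hD₂, Submodule.mem_span_pair] at hX
    obtain ⟨a, b, hab⟩ := hX
    have hXc : ∀ k : Fin 6, X k = a * (if k = 3 then 1 else 0) + b * (w k) := by
      intro k
      rw [← hab]
      simp [EuclideanSpace.single_apply]
    have hX2 : X 2 = b * c := by
      rw [hXc 2, hwcoord]; simp (config := {decide := true})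
    have hX3 : X 3 = a := by
      rw [hXc 3, hwcoord]; simp (config := {decide := true})
    have hX4 : X 4 = b * s := by
      rw [hXc 4, hwcoord]; simp (config := {decide := true})
    have hX0' : X 0 = 0 := by
      rw [hXc 0, hwcoord]; simp (config := {decide := true})
    have hX1' : X 1 = 0 := by
      rw [hXc 1, hwcoord]; simp (config := {decide := true})
    have hX5' : X 5 = 0 := by
      rw [hXc 5, hwcoord]; simp (config := {decide := true})
    have hJX0 : J X 0 = 0 := by
      rw [hJ X 0]; simp (config := {decide := true}) [hX1']
    have hJX1 : J X 1 = 0 := by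
      rw [hJ X 1]; simp (config := {decide := true}) [hX0']
    have hJX2 : J X 2 = -a := by
      rw [hJ X 2]; simp (config := {decide := true}) [hX3]
    have hJX3 : J X 3 = b * c := by
      rw [hJ X 3]; simp (config := {decide := true}) [hX2]
    have hJX4 : J X 4 = 0 := by
      rw [hJ X 4]; simp (config := {decide := true}) [hX5']
    have hJX5 : J X 5 = b * s := by
      rw [hJ X 5]; simp (config := {decide := true}) [hX4]
    have habpos : 0 < a ^ 2 + b ^ 2 := by
      rcases eq_or_ne a 0 with ha | ha
      · rcases eq_or_ne b 0 with hb | hb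
        · exact absurd (by rw [← hab, ha, hb]; simp) hX0
        · positivity
      · positivity
    set p : EuclideanSpace ℝ (Fin 6) :=
      (b * c) • EuclideanSpace.single 3 (1:ℝ) + (-(a * c)) • w with hp
    have hpc : ∀ k : Fin 6, p k
        = (b * c) * (if k = 3 then 1 else 0) + (-(a * c)) * w k := by
      intro k
      simp [hp, EuclideanSpace.single_apply]
    have hp0 : p 0 = 0 := by
      rw [hpc 0, hwcoord]; simp (config := {decide := true})
    have hp1 : p 1 = 0 := by
      rw [hpc 1, hwcoord]; simp (config := {decide := true})
    have hp2 : p 2 = -(a * c) * c := by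
      rw [hpc 2, hwcoord]; simp (config := {decide := true})
    have hp3 : p 3 = b * c := by
      rw [hpc 3, hwcoord]; simp (config := {decide := true})
    have hp4 : p 4 = -(a * c) * s := by
      rw [hpc 4, hwcoord]; simp (config := {decide := true})
    have hp5 : p 5 = 0 := by
      rw [hpc 5, hwcoord]; simp (config := {decide := true})
    have hpmem : p ∈ D₂ := by
      rw [hD₂]
      exact Submodule.add_mem _
        (Submodule.smul_mem _ _ (Submodule.subset_span (by simp)))
        (Submodule.smul_mem _ _ (Submodule.subset_span (by simp)))
    have hproj : (Submodule.orthogonalProjection D₂ (J X) : EuclideanSpace ℝ (Fin 6)) = p := by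
      refine Submodule.eq_starProjection_of_mem_of_inner_eq_zero hpmem ?_
      intro y hy
      rw [hD₂, Submodule.mem_span_pair] at hy
      obtain ⟨u, v, rfl⟩ := hy
      simp only [PiLp.inner_apply, RCLike.inner_apply, conj_trivial, Fin.sum_univ_six,
        PiLp.sub_apply, PiLp.add_apply, PiLp.smul_apply, smul_eq_mul,
        EuclideanSpace.single_apply, hwcoord, hJX0, hJX1, hJX2, hJX3, hJX4, hJX5,
        hp0, hp1, hp2, hp3, hp4, hp5]
      simp (config := {decide := true})
      linear_combination (v * a * c) * hsc
    rw [hproj]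
    have hinner : (inner ℝ (J X) p : ℝ) = c ^ 2 * (a ^ 2 + b ^ 2) := by
      simp only [PiLp.inner_apply, RCLike.inner_apply, conj_trivial, Fin.sum_univ_six,
        hJX0, hJX1, hJX2, hJX3, hJX4, hJX5, hp0, hp1, hp2, hp3, hp4, hp5]
      ring
    have hnJX : ‖J X‖ = Real.sqrt (a ^ 2 + b ^ 2) := by
      rw [EuclideanSpace.norm_eq, Fin.sum_univ_six, hJX0, hJX1, hJX2, hJX3, hJX4, hJX5]
      congr 1
      simp only [Real.norm_eq_abs, sq_abs]
      linear_combination (b ^ 2) * hsc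
    have hnp : ‖p‖ = c * Real.sqrt (a ^ 2 + b ^ 2) := by
      rw [EuclideanSpace.norm_eq, Fin.sum_univ_six, hp0, hp1, hp2, hp3, hp4, hp5]
      have hsum : ‖(0:ℝ)‖ ^ 2 + ‖(0:ℝ)‖ ^ 2 + ‖-(a * c) * c‖ ^ 2 + ‖b * c‖ ^ 2
          + ‖-(a * c) * s‖ ^ 2 + ‖(0:ℝ)‖ ^ 2 = c ^ 2 * (a ^ 2 + b ^ 2) := by
        simp only [Real.norm_eq_abs, sq_abs]
        linear_combination (a ^ 2 * c ^ 2) * hsc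
      rw [hsum, Real.sqrt_mul (sq_nonneg c), Real.sqrt_sq hc.le]
    have hdef : InnerProductGeometry.angle (J X) p
        = Real.arccos ((inner ℝ (J X) p : ℝ) / (‖J X‖ * ‖p‖)) := rfl
    rw [hdef, hinner, hnJX, hnp]
    have hss : Real.sqrt (a ^ 2 + b ^ 2) * Real.sqrt (a ^ 2 + b ^ 2) = a ^ 2 + b ^ 2 :=
      Real.mul_self_sqrt habpos.le
    have hq : c ^ 2 * (a ^ 2 + b ^ 2)
        / (Real.sqrt (a ^ 2 + b ^ 2) * (c * Real.sqrt (a ^ 2 + b ^ 2))) = c := by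
      rw [mul_left_comm, hss]
      field_simp
    rw [hq]
    exact Real.arccos_cos hα0.le (by linarith)
  exact ⟨hsurj, hiso, hkerD, horth, hmap, hangle⟩
end

section
/- Fix real constants α, β and let F : ℝ⁸ → ℝ⁴ be the linear map F(x₁,…,x₈) = (x₁, x₂, x₃ cos α − x₅ sin α, x₄ sin β − x₆ cos β). Then: (i) F is surjective and ‖F(v)‖ = ‖v‖ for every v in the orthogonal complement of ker F (so F is a Riemannian submersion of Euclidean spaces); (ii) ker F is the orthogonal direct sum of D₁ = span{e₇, e₈} and D₂ = span{sin α · e₃ + cos α · e₅, cos β · e₄ + sin β · e₆}; (iii) J(D₁) = D₁; (iv) for every nonzero X ∈ D₂, the cosine of the angle between JX and the orthogonal projection of JX onto D₂ equals |sin(α + β)|. Hence F is a semi-slant submersion with semi-slant angle θ determined by cos θ = |sin(α + β)|. -/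
set_option maxHeartbeats 2000000 in
/-- Example 3.9: For constants `α, β`, the map
`F : ℝ⁸ → ℝ⁴, F(x) = (x₁, x₂, x₃ cos α − x₅ sin α, x₄ sin β − x₆ cos β)` is a
Riemannian submersion which is semi-slant with semi-slant angle `θ` determined by
`cos θ = |sin (α+β)|`, where `J` is the standard complex structure (written here in
0-indexed coordinates), `D₁ = span{e₇, e₈}` and
`D₂ = span{sin α · e₃ + cos α · e₅, cos β · e₄ + sin β · e₆}` (1-indexed). -/
theorem stmt_15 (α β : ℝ)
    (J : EuclideanSpace ℝ (Fin 8) →ₗ[ℝ] EuclideanSpace ℝ (Fin 8))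
    (hJ : ∀ (x : EuclideanSpace ℝ (Fin 8)) (k : Fin 8),
      J x k = if k.val % 2 = 0 then -(x (k + 1)) else x (k - 1))
    (F : EuclideanSpace ℝ (Fin 8) →ₗ[ℝ] EuclideanSpace ℝ (Fin 4))
    (hF : ∀ x : EuclideanSpace ℝ (Fin 8),
      F x 0 = x 0 ∧ F x 1 = x 1 ∧
      F x 2 = x 2 * Real.cos α - x 4 * Real.sin α ∧
      F x 3 = x 3 * Real.sin β - x 5 * Real.cos β)
    (D₁ D₂ : Submodule ℝ (EuclideanSpace ℝ (Fin 8)))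
    (hD₁ : D₁ = Submodule.span ℝ
      {EuclideanSpace.single 6 (1 : ℝ), EuclideanSpace.single 7 (1 : ℝ)})
    (hD₂ : D₂ = Submodule.span ℝ
      {Real.sin α • EuclideanSpace.single 2 (1 : ℝ)
         + Real.cos α • EuclideanSpace.single 4 (1 : ℝ),
       Real.cos β • EuclideanSpace.single 3 (1 : ℝ)
         + Real.sin β • EuclideanSpace.single 5 (1 : ℝ)}) :
    Function.Surjective F ∧
    (∀ v ∈ (LinearMap.ker F)ᗮ, ‖F v‖ = ‖v‖) ∧
    LinearMap.ker F = D₁ ⊔ D₂ ∧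
    (∀ x ∈ D₁, ∀ y ∈ D₂, inner ℝ x y = (0 : ℝ)) ∧
    D₁.map J = D₁ ∧
    (∀ X ∈ D₂, X ≠ 0 →
      Real.cos (InnerProductGeometry.angle (J X)
        (D₂.orthogonalProjectionOnto (J X) : EuclideanSpace ℝ (Fin 8)))
        = |Real.sin (α + β)|) := by
  have pyth : ∀ t : ℝ, Real.sin t ^ 2 + Real.cos t ^ 2 = 1 := Real.sin_sq_add_cos_sq
  -- the generators of the kernel lie in the kernel
  have huker : Real.sin α • EuclideanSpace.single 2 (1 : ℝ)
      + Real.cos α • EuclideanSpace.single 4 (1 : ℝ) ∈ LinearMap.ker F := by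
    rw [LinearMap.mem_ker]
    obtain ⟨h0, h1, h2, h3⟩ := hF (Real.sin α • EuclideanSpace.single 2 (1 : ℝ)
      + Real.cos α • EuclideanSpace.single 4 (1 : ℝ))
    ext j
    fin_cases j <;>
      simp [-map_add, -map_smul, -LinearMap.map_smul_of_tower, h0, h1, h2, h3, EuclideanSpace.single_apply] <;> ring
  have hwker : Real.cos β • EuclideanSpace.single 3 (1 : ℝ)
      + Real.sin β • EuclideanSpace.single 5 (1 : ℝ) ∈ LinearMap.ker F := by
    rw [LinearMap.mem_ker]
    obtain ⟨h0, h1, h2, h3⟩ := hF (Real.cos β • EuclideanSpace.single 3 (1 : ℝ)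
      + Real.sin β • EuclideanSpace.single 5 (1 : ℝ))
    ext j
    fin_cases j <;>
      simp [-map_add, -map_smul, -LinearMap.map_smul_of_tower, h0, h1, h2, h3, EuclideanSpace.single_apply] <;> ring
  have h6ker : (EuclideanSpace.single 6 (1:ℝ) : EuclideanSpace ℝ (Fin 8)) ∈ LinearMap.ker F := by
    rw [LinearMap.mem_ker]
    obtain ⟨h0, h1, h2, h3⟩ := hF (EuclideanSpace.single 6 (1:ℝ))
    ext j
    fin_cases j <;> simp [h0, h1, h2, h3, EuclideanSpace.single_apply]
  have h7ker : (EuclideanSpace.single 7 (1:ℝ) : EuclideanSpace ℝ (Fin 8)) ∈ LinearMap.ker F := by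
    rw [LinearMap.mem_ker]
    obtain ⟨h0, h1, h2, h3⟩ := hF (EuclideanSpace.single 7 (1:ℝ))
    ext j
    fin_cases j <;> simp [h0, h1, h2, h3, EuclideanSpace.single_apply]
  -- the kernel is D₁ ⊔ D₂
  have hker : LinearMap.ker F = D₁ ⊔ D₂ := by
    apply le_antisymm
    · intro x hx
      rw [LinearMap.mem_ker] at hx
      have h0 : x 0 = 0 := by
        have h := congrArg (fun z : EuclideanSpace ℝ (Fin 4) => z 0) hx
        simpa [(hF x).1] using h
      have h1 : x 1 = 0 := by
        have h := congrArg (fun z : EuclideanSpace ℝ (Fin 4) => z 1) hx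
        simpa [(hF x).2.1] using h
      have h2 : x 2 * Real.cos α - x 4 * Real.sin α = 0 := by
        have h := congrArg (fun z : EuclideanSpace ℝ (Fin 4) => z 2) hx
        simpa [(hF x).2.2.1] using h
      have h3 : x 3 * Real.sin β - x 5 * Real.cos β = 0 := by
        have h := congrArg (fun z : EuclideanSpace ℝ (Fin 4) => z 3) hx
        simpa [(hF x).2.2.2] using h
      rw [Submodule.mem_sup]
      refine ⟨x 6 • EuclideanSpace.single 6 (1:ℝ) + x 7 • EuclideanSpace.single 7 (1:ℝ), ?_,
        (x 2 * Real.sin α + x 4 * Real.cos α) • (Real.sin α • EuclideanSpace.single 2 (1 : ℝ)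
          + Real.cos α • EuclideanSpace.single 4 (1 : ℝ))
        + (x 3 * Real.cos β + x 5 * Real.sin β) • (Real.cos β • EuclideanSpace.single 3 (1 : ℝ)
          + Real.sin β • EuclideanSpace.single 5 (1 : ℝ)), ?_, ?_⟩
      · rw [hD₁]; exact Submodule.mem_span_pair.mpr ⟨x 6, x 7, rfl⟩
      · rw [hD₂]; exact Submodule.mem_span_pair.mpr ⟨_, _, rfl⟩
      · ext k
        fin_cases k
        · simp [EuclideanSpace.single_apply, h0]
        · simp [EuclideanSpace.single_apply, h1]
        · simp [EuclideanSpace.single_apply]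
          linear_combination x 2 * pyth α - Real.cos α * h2
        · simp [EuclideanSpace.single_apply]
          linear_combination x 3 * pyth β - Real.sin β * h3
        · simp [EuclideanSpace.single_apply]
          linear_combination x 4 * pyth α + Real.sin α * h2
        · simp [EuclideanSpace.single_apply]
          linear_combination x 5 * pyth β + Real.cos β * h3
        · simp [EuclideanSpace.single_apply]
        · simp [EuclideanSpace.single_apply]
    · rw [hD₁, hD₂]
      apply sup_le <;> rw [Submodule.span_le] <;> intro z hz <;>
        simp only [Set.mem_insert_iff, Set.mem_singleton_iff] at hz
      · rcases hz with rfl | rfl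
        · exact h6ker
        · exact h7ker
      · rcases hz with rfl | rfl
        · exact huker
        · exact hwker
  refine ⟨?_, ?_, hker, ?_, ?_, ?_⟩
  · -- surjectivity
    intro y
    refine ⟨(WithLp.equiv 2 (Fin 8 → ℝ)).symm (fun k =>
      if k = 0 then y 0 else if k = 1 then y 1 else
      if k = 2 then y 2 * Real.cos α else if k = 3 then y 3 * Real.sin β else
      if k = 4 then -(y 2 * Real.sin α) else if k = 5 then -(y 3 * Real.cos β) else 0), ?_⟩
    obtain ⟨h0, h1, h2, h3⟩ := hF ((WithLp.equiv 2 (Fin 8 → ℝ)).symm (fun k =>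
      if k = 0 then y 0 else if k = 1 then y 1 else
      if k = 2 then y 2 * Real.cos α else if k = 3 then y 3 * Real.sin β else
      if k = 4 then -(y 2 * Real.sin α) else if k = 5 then -(y 3 * Real.cos β) else 0))
    simp only [WithLp.equiv_symm_apply] at h0 h1 h2 h3
    ext j
    fin_cases j
    · simp [h0, PiLp.toLp_apply]
    · simp [h1, PiLp.toLp_apply]
    · simp [h2, PiLp.toLp_apply]
      linear_combination y 2 * pyth α
    · simp [h3, PiLp.toLp_apply]
      linear_combination y 3 * pyth β
  · -- norm preservation on the orthogonal complement of the kernel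
    intro v hv
    rw [Submodule.mem_orthogonal] at hv
    have o1 := hv _ huker
    have o2 := hv _ hwker
    have o3 := hv _ h6ker
    have o4 := hv _ h7ker
    simp [PiLp.inner_apply, RCLike.inner_apply, Fin.sum_univ_eight,
      EuclideanSpace.single_apply] at o1 o2 o3 o4
    rw [EuclideanSpace.norm_eq, EuclideanSpace.norm_eq]
    congr 1
    rw [Fin.sum_univ_four, Fin.sum_univ_eight]
    rw [(hF v).1, (hF v).2.1, (hF v).2.2.1, (hF v).2.2.2]
    simp only [Real.norm_eq_abs, sq_abs, o3, o4]
    linear_combination (v 2 ^ 2 + v 4 ^ 2) * pyth α - (Real.sin α * v 2 + Real.cos α * v 4) * o1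
      + (v 3 ^ 2 + v 5 ^ 2) * pyth β - (Real.cos β * v 3 + Real.sin β * v 5) * o2
  · -- D₁ and D₂ are orthogonal
    intro x hx y hy
    rw [hD₁] at hx; rw [hD₂] at hy
    obtain ⟨m, n, rfl⟩ := Submodule.mem_span_pair.mp hx
    obtain ⟨p, q, rfl⟩ := Submodule.mem_span_pair.mp hy
    simp [PiLp.inner_apply, RCLike.inner_apply, Fin.sum_univ_eight,
      EuclideanSpace.single_apply]
  · -- J preserves D₁
    have hJ6 : J (EuclideanSpace.single 6 (1:ℝ)) = EuclideanSpace.single 7 (1:ℝ) := by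
      ext k; rw [hJ]; fin_cases k <;> simp [EuclideanSpace.single_apply]
    have hJ7 : J (EuclideanSpace.single 7 (1:ℝ)) = -(EuclideanSpace.single 6 (1:ℝ)) := by
      ext k; rw [hJ]; fin_cases k <;> simp [EuclideanSpace.single_apply]
    rw [hD₁]
    apply le_antisymm
    · rw [Submodule.map_span, Submodule.span_le]
      rintro z ⟨g, hg, rfl⟩
      simp only [Set.mem_insert_iff, Set.mem_singleton_iff] at hg
      rcases hg with rfl | rfl
      · rw [hJ6]
        exact Submodule.subset_span (by simp)
      · rw [hJ7]
        exact neg_mem (Submodule.subset_span (by simp))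
    · rw [Submodule.span_le]
      intro z hz
      simp only [Set.mem_insert_iff, Set.mem_singleton_iff] at hz
      rcases hz with rfl | rfl
      · exact ⟨-(EuclideanSpace.single 7 (1:ℝ)),
          neg_mem (Submodule.subset_span (by simp)), by rw [map_neg, hJ7, neg_neg]⟩
      · exact ⟨EuclideanSpace.single 6 (1:ℝ), Submodule.subset_span (by simp), hJ6⟩
  · -- the slant angle of D₂
    intro X hX hX0
    rw [hD₂] at hX
    obtain ⟨a, b, rfl⟩ := Submodule.mem_span_pair.mp hX
    set s := Real.sin (α + β) with hs
    set u : EuclideanSpace ℝ (Fin 8) := Real.sin α • EuclideanSpace.single 2 (1 : ℝ)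
      + Real.cos α • EuclideanSpace.single 4 (1 : ℝ) with hu
    set w : EuclideanSpace ℝ (Fin 8) := Real.cos β • EuclideanSpace.single 3 (1 : ℝ)
      + Real.sin β • EuclideanSpace.single 5 (1 : ℝ) with hw
    set p : EuclideanSpace ℝ (Fin 8) := (-(b * s)) • u + (a * s) • w with hp
    have hpmem : p ∈ D₂ := by
      rw [hD₂]; exact Submodule.mem_span_pair.mpr ⟨_, _, rfl⟩
    have hab : a ^ 2 + b ^ 2 ≠ 0 := by
      intro h
      apply hX0
      have ha : a = 0 := by nlinarith
      have hb : b = 0 := by nlinarith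
      simp [ha, hb]
    have i1 : (inner ℝ (J (a • u + b • w) - p) u : ℝ) = 0 := by
      simp +decide [PiLp.inner_apply, RCLike.inner_apply, Fin.sum_univ_eight,
        PiLp.sub_apply, hJ, hu, hw, hp, hs, Real.sin_add, EuclideanSpace.single_apply]
      linear_combination (b * (Real.sin α * Real.cos β + Real.cos α * Real.sin β)) * pyth α
    have i2 : (inner ℝ (J (a • u + b • w) - p) w : ℝ) = 0 := by
      simp +decide [PiLp.inner_apply, RCLike.inner_apply, Fin.sum_univ_eight,
        PiLp.sub_apply, hJ, hu, hw, hp, hs, Real.sin_add, EuclideanSpace.single_apply]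
      linear_combination (-(a * (Real.sin α * Real.cos β + Real.cos α * Real.sin β))) * pyth β
    have hproj : (D₂.orthogonalProjectionOnto (J (a • u + b • w)) : EuclideanSpace ℝ (Fin 8)) = p := by
      apply Submodule.eq_starProjection_of_mem_of_inner_eq_zero hpmem
      intro z hz
      rw [hD₂] at hz
      obtain ⟨m, n, rfl⟩ := Submodule.mem_span_pair.mp hz
      rw [inner_add_right, real_inner_smul_right, real_inner_smul_right, i1, i2]
      ring
    have hip : (inner ℝ (J (a • u + b • w)) p : ℝ) = s ^ 2 * (a ^ 2 + b ^ 2) := by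
      simp +decide [PiLp.inner_apply, RCLike.inner_apply, Fin.sum_univ_eight,
        hJ, hu, hw, hp, hs, Real.sin_add, EuclideanSpace.single_apply]
      ring
    have jx2 : (inner ℝ (J (a • u + b • w)) (J (a • u + b • w)) : ℝ) = a ^ 2 + b ^ 2 := by
      simp +decide [-inner_self_eq_norm_sq_to_K, PiLp.inner_apply, RCLike.inner_apply, Fin.sum_univ_eight,
        hJ, hu, hw, EuclideanSpace.single_apply]
      linear_combination a ^ 2 * pyth α + b ^ 2 * pyth β
    have hnJX : ‖J (a • u + b • w)‖ = Real.sqrt (a ^ 2 + b ^ 2) := by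
      rw [← Real.sqrt_sq (norm_nonneg (J (a • u + b • w))), ← real_inner_self_eq_norm_sq, jx2]
    have pp2 : (inner ℝ p p : ℝ) = s ^ 2 * (a ^ 2 + b ^ 2) := by
      simp +decide [-inner_self_eq_norm_sq_to_K, PiLp.inner_apply, RCLike.inner_apply, Fin.sum_univ_eight,
        hp, hu, hw, EuclideanSpace.single_apply]
      linear_combination (s ^ 2 * a ^ 2) * pyth β + (s ^ 2 * b ^ 2) * pyth α
    have hnp : ‖p‖ = |s| * Real.sqrt (a ^ 2 + b ^ 2) := by
      rw [← Real.sqrt_sq (norm_nonneg p), ← real_inner_self_eq_norm_sq, pp2,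
        Real.sqrt_mul (sq_nonneg s), Real.sqrt_sq_eq_abs]
    rw [hproj, InnerProductGeometry.cos_angle, hip, hnJX, hnp]
    have hsq : Real.sqrt (a ^ 2 + b ^ 2) * Real.sqrt (a ^ 2 + b ^ 2) = a ^ 2 + b ^ 2 :=
      Real.mul_self_sqrt (by positivity)
    have hpos : 0 < a ^ 2 + b ^ 2 := lt_of_le_of_ne (by positivity) (Ne.symm hab)
    have hsqrt : Real.sqrt (a ^ 2 + b ^ 2) ≠ 0 := by positivity
    rcases eq_or_ne s 0 with h | h
    · simp [h]
    · have habs : |s| ≠ 0 := abs_ne_zero.mpr h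
      rw [div_eq_iff (mul_ne_zero hsqrt (mul_ne_zero habs hsqrt))]
      linear_combination (-(|s| ^ 2)) * hsq - (a ^ 2 + b ^ 2) * (sq_abs s)
end
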